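/- For the standard symplectic matrix J on ℝ^{2d} (J(x,ω) = (ω,−x)) and p ≠ q in [1,∞], the map D_J : f ↦ f ∘ J⁻¹ is not everywhere defined on L^{p,q}(ℝ^{2d}): there exists f ∈ L^{p,q}(ℝ^{2d}) with f ∘ J⁻¹ ∉ L^{p,q}(ℝ^{2d}). -/

import Mathlib

open MeasureTheory
open scoped ENNReal

/-- The mixed-norm `L^{p,q}` norm: `‖f‖_{p,q} = ‖ ω ↦ ‖f(·,ω)‖_{L^p} ‖_{L^q}`. -/
noncomputable def mixedNorm {d : ℕ} {E : Type*} [NormedAddCommGroup E]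
    (p q : ℝ≥0∞) (f : (Fin d → ℝ) × (Fin d → ℝ) → E) : ℝ≥0∞ :=
  if q = ⊤ then essSup (fun ω => eLpNorm (fun x => f (x, ω)) p volume) volume
  else (∫⁻ ω, (eLpNorm (fun x => f (x, ω)) p volume) ^ q.toReal ∂volume) ^ (1 / q.toReal)

section Aux

open Set Metric

variable {d : ℕ}

lemma aux_vol_ne_zero (d : ℕ) : (volume : Measure (Fin d → ℝ)) ≠ 0 := by
  intro h
  have h1 := measure_ball_pos (volume : Measure (Fin d → ℝ)) (0 : Fin d → ℝ) one_pos
  rw [h] at h1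
  simp at h1

/-- Finiteness of the mixed norm of a product function. -/
lemma mixed_fin {p q : ℝ≥0∞} (hp : 1 ≤ p) (hq : 1 ≤ q)
    (a b : (Fin d → ℝ) → ℂ) (hb : AEMeasurable b volume)
    (ha' : eLpNorm a p volume < ⊤) (hb' : eLpNorm b q volume < ⊤) :
    mixedNorm p q (fun z => a z.1 * b z.2) < ⊤ := by
  have hq0 : q ≠ 0 := (one_pos.trans_le hq).ne'
  have inner : ∀ ω, eLpNorm (fun x : Fin d → ℝ => a x * b ω) p volume
      = (‖b ω‖₊ : ℝ≥0∞) * eLpNorm a p volume := by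
    intro ω
    have h1 : (fun x : Fin d → ℝ => a x * b ω) = (b ω) • a := by
      funext x; simp [mul_comm]
    rw [h1, eLpNorm_const_smul, enorm_eq_nnnorm]
  rw [mixedNorm]
  split_ifs with hqt
  · subst hqt
    simp only [inner]
    have h2 : essSup (fun ω : Fin d → ℝ => (‖b ω‖₊ : ℝ≥0∞) * eLpNorm a p volume) volume
        = eLpNorm a p volume * essSup (fun ω : Fin d → ℝ => (‖b ω‖₊ : ℝ≥0∞)) volume := by
      rw [show (fun ω : Fin d → ℝ => (‖b ω‖₊ : ℝ≥0∞) * eLpNorm a p volume)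
          = (fun ω : Fin d → ℝ => eLpNorm a p volume * (‖b ω‖₊ : ℝ≥0∞)) from
        funext fun ω => mul_comm _ _, ENNReal.essSup_const_mul]
    rw [h2]
    refine ENNReal.mul_lt_top ha' ?_
    rwa [eLpNorm_exponent_top, eLpNormEssSup] at hb'
  · have hqr : 0 < q.toReal := ENNReal.toReal_pos hq0 hqt
    have key : ∀ ω : Fin d → ℝ, (eLpNorm (fun x => a x * b ω) p volume) ^ q.toReal
        = (eLpNorm a p volume) ^ q.toReal * ((‖b ω‖₊ : ℝ≥0∞)) ^ q.toReal := by
      intro ω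
      rw [inner, ENNReal.mul_rpow_of_nonneg _ _ hqr.le, mul_comm]
    simp_rw [key]
    rw [lintegral_const_mul' _ _ (ENNReal.rpow_lt_top_of_nonneg hqr.le ha'.ne).ne]
    refine ENNReal.rpow_lt_top_of_nonneg (by positivity) ?_
    refine ENNReal.mul_ne_top (ENNReal.rpow_lt_top_of_nonneg hqr.le ha'.ne).ne ?_
    exact (lintegral_rpow_enorm_lt_top_of_eLpNorm_lt_top hq0 hqt hb').ne

/-- If the inner norm is infinite on a set of positive measure, the mixed norm is infinite. -/
lemma mixed_inf {p q : ℝ≥0∞} (hq : 1 ≤ q)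
    (f : (Fin d → ℝ) × (Fin d → ℝ) → ℂ)
    (S : Set (Fin d → ℝ)) (hSm : MeasurableSet S) (hS : 0 < volume S)
    (hf : ∀ ω ∈ S, eLpNorm (fun x => f (x, ω)) p volume = ⊤) :
    mixedNorm p q f = ⊤ := by
  have hq0 : q ≠ 0 := (one_pos.trans_le hq).ne'
  rw [mixedNorm]
  split_ifs with hqt
  · by_contra hne
    have hlt : essSup (fun ω => eLpNorm (fun x => f (x, ω)) p volume) volume < ⊤ :=
      lt_top_iff_ne_top.2 hne
    have hae := ae_le_essSup (μ := volume)
      (f := fun ω => eLpNorm (fun x => f (x, ω)) p volume)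
    have h0 : volume {ω | ¬ eLpNorm (fun x => f (x, ω)) p volume
        ≤ essSup (fun ω => eLpNorm (fun x => f (x, ω)) p volume) volume} = 0 := ae_iff.1 hae
    have hsub : S ⊆ {ω | ¬ eLpNorm (fun x => f (x, ω)) p volume
        ≤ essSup (fun ω => eLpNorm (fun x => f (x, ω)) p volume) volume} := by
      intro ω hω
      simp only [Set.mem_setOf_eq, hf ω hω, top_le_iff]
      exact hne
    exact hS.ne' (measure_mono_null hsub h0)
  · have hqr : 0 < q.toReal := ENNReal.toReal_pos hq0 hqt
    have h1 : ∫⁻ ω, (eLpNorm (fun x => f (x, ω)) p volume) ^ q.toReal ∂volume = ⊤ := by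
      refine top_unique ?_
      calc (⊤ : ℝ≥0∞) = ∫⁻ _ in S, ⊤ ∂volume := by
            rw [setLIntegral_const]
            exact (ENNReal.top_mul hS.ne').symm
        _ = ∫⁻ ω in S, (eLpNorm (fun x => f (x, ω)) p volume) ^ q.toReal ∂volume := by
            refine setLIntegral_congr_fun_ae hSm (ae_of_all _ fun ω hω => ?_)
            rw [hf ω hω, ENNReal.top_rpow_of_pos hqr]
        _ ≤ ∫⁻ ω, (eLpNorm (fun x => f (x, ω)) p volume) ^ q.toReal ∂volume :=
            setLIntegral_le_lintegral _ _
    rw [h1, ENNReal.top_rpow_of_pos (by positivity)]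

/-- Existence of a function in `L^q \ L^p` on `ℝ^{m+1}`, for finite `p ≠ q`. -/
lemma exists_lq_not_lp (m : ℕ) {p q : ℝ≥0∞} (hp : 1 ≤ p) (hq : 1 ≤ q)
    (hpt : p ≠ ⊤) (hqt : q ≠ ⊤) (hpq : p ≠ q) :
    ∃ g : (Fin (m + 1) → ℝ) → ℂ, Measurable g ∧
      eLpNorm g q volume < ⊤ ∧ eLpNorm g p volume = ⊤ := by
  set a : ℝ := p.toReal with ha_def
  set b : ℝ := q.toReal with hb_def
  have ha1 : 1 ≤ a := by
    rw [ha_def, ← ENNReal.toReal_one]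
    exact ENNReal.toReal_mono hpt hp
  have hb1 : 1 ≤ b := by
    rw [hb_def, ← ENNReal.toReal_one]
    exact ENNReal.toReal_mono hqt hq
  have ha0 : (0:ℝ) < a := lt_of_lt_of_le one_pos ha1
  have hb0 : (0:ℝ) < b := lt_of_lt_of_le one_pos hb1
  have hab : a ≠ b := fun h => hpq ((ENNReal.toReal_eq_toReal_iff' hpt hqt).1 h)
  -- choose the set T
  obtain ⟨T, hTm, hTsub, hint_b, hnint_a⟩ :
      ∃ T : Set ℝ, MeasurableSet T ∧ T ⊆ Set.Ioi (0:ℝ) ∧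
        IntegrableOn (fun t : ℝ => t ^ (-a⁻¹ * b)) T volume ∧
        ¬ IntegrableOn (fun t : ℝ => t ^ (-a⁻¹ * a)) T volume := by
    have hmaa : -a⁻¹ * a = -1 := by field_simp
    rcases lt_or_gt_of_ne hab with h | h
    · refine ⟨Set.Ioi 1, measurableSet_Ioi, Set.Ioi_subset_Ioi zero_le_one, ?_, ?_⟩
      · refine (integrableOn_Ioi_rpow_iff zero_lt_one).2 ?_
        rw [neg_mul, neg_lt_neg_iff, inv_mul_eq_div]
        exact (one_lt_div ha0).2 h
      · intro hint
        rw [integrableOn_Ioi_rpow_iff zero_lt_one, hmaa] at hint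
        exact lt_irrefl _ hint
    · refine ⟨Set.Ioo 0 1, measurableSet_Ioo, Set.Ioo_subset_Ioi_self, ?_, ?_⟩
      · refine (intervalIntegral.integrableOn_Ioo_rpow_iff zero_lt_one).2 ?_
        rw [neg_mul, neg_lt_neg_iff]
        rw [inv_mul_eq_div, div_lt_one ha0]
        linarith
      · intro hint
        rw [intervalIntegral.integrableOn_Ioo_rpow_iff zero_lt_one, hmaa] at hint
        exact lt_irrefl _ hint
  -- the one-dimensional profile and the cube bump
  set h : ℝ → ℝ := T.indicator (fun t => t ^ (-a⁻¹)) with hh_def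
  set C : Set (Fin m → ℝ) := Set.univ.pi (fun _ => Set.Icc (0:ℝ) 1) with hC_def
  set k : (Fin m → ℝ) → ℝ := C.indicator (fun _ => 1) with hk_def
  have hCm : MeasurableSet C := MeasurableSet.univ_pi fun _ => measurableSet_Icc
  have hh_meas : Measurable h := (measurable_id.pow_const _).indicator hTm
  have hk_meas : Measurable k := measurable_const.indicator hCm
  set e := MeasurableEquiv.piFinSuccAbove (fun _ : Fin (m + 1) => ℝ) 0 with he_def
  set g : (Fin (m + 1) → ℝ) → ℂ := fun x => ((h (e x).1 * k (e x).2 : ℝ) : ℂ) with hg_def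
  have hg_meas : Measurable g :=
    Complex.measurable_ofReal.comp
      ((hh_meas.comp (measurable_fst.comp e.measurable)).mul
        (hk_meas.comp (measurable_snd.comp e.measurable)))
  -- volume of the cube is one
  have hvolC : volume C = 1 := by
    rw [hC_def, volume_pi_pi]
    simp [Real.volume_Icc]
  -- the key lintegral computation
  have key : ∀ s : ℝ, 0 < s →
      (∫⁻ x, ((‖g x‖₊ : ℝ≥0∞)) ^ s ∂volume)
        = ∫⁻ t in T, (‖(fun t : ℝ => t ^ (-a⁻¹ * s)) t‖₊ : ℝ≥0∞) ∂volume := by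
    intro s hs
    have hmeas2 : Measurable fun y : ℝ × (Fin m → ℝ) =>
        ((‖h y.1‖₊ : ℝ≥0∞)) ^ s * ((‖k y.2‖₊ : ℝ≥0∞)) ^ s :=
      (((hh_meas.comp measurable_fst).nnnorm.coe_nnreal_ennreal).pow_const s).mul
        (((hk_meas.comp measurable_snd).nnnorm.coe_nnreal_ennreal).pow_const s)
    have step1 : (∫⁻ x, ((‖g x‖₊ : ℝ≥0∞)) ^ s ∂volume)
        = ∫⁻ x, ((‖h (e x).1‖₊ : ℝ≥0∞)) ^ s * ((‖k (e x).2‖₊ : ℝ≥0∞)) ^ s ∂volume := by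
      congr 1
      funext x
      rw [hg_def]
      simp only [Complex.nnnorm_real, nnnorm_mul, ENNReal.coe_mul]
      rw [ENNReal.mul_rpow_of_nonneg _ _ hs.le]
    have step2 : (∫⁻ x, ((‖h (e x).1‖₊ : ℝ≥0∞)) ^ s * ((‖k (e x).2‖₊ : ℝ≥0∞)) ^ s ∂volume)
        = ∫⁻ y : ℝ × (Fin m → ℝ), ((‖h y.1‖₊ : ℝ≥0∞)) ^ s * ((‖k y.2‖₊ : ℝ≥0∞)) ^ s ∂volume :=
      (volume_preserving_piFinSuccAbove (fun _ : Fin (m + 1) => ℝ) 0).lintegral_comp hmeas2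
    have step3 : (∫⁻ y : ℝ × (Fin m → ℝ), ((‖h y.1‖₊ : ℝ≥0∞)) ^ s * ((‖k y.2‖₊ : ℝ≥0∞)) ^ s ∂volume)
        = (∫⁻ t, ((‖h t‖₊ : ℝ≥0∞)) ^ s ∂volume) * ∫⁻ y, ((‖k y‖₊ : ℝ≥0∞)) ^ s ∂volume :=
      lintegral_prod_mul
        (((hh_meas.nnnorm.coe_nnreal_ennreal).pow_const s).aemeasurable)
        (((hk_meas.nnnorm.coe_nnreal_ennreal).pow_const s).aemeasurable)
    have stepk : (∫⁻ y, ((‖k y‖₊ : ℝ≥0∞)) ^ s ∂volume) = 1 := by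
      have hky : ∀ y, ((‖k y‖₊ : ℝ≥0∞)) ^ s = C.indicator (fun _ => (1:ℝ≥0∞)) y := by
        intro y
        by_cases hy : y ∈ C
        · simp [hk_def, Set.indicator_of_mem hy]
        · simp [hk_def, Set.indicator_of_notMem hy, ENNReal.zero_rpow_of_pos hs]
      simp_rw [hky]
      rw [lintegral_indicator hCm, setLIntegral_const, one_mul, hvolC]
    have steph : (∫⁻ t, ((‖h t‖₊ : ℝ≥0∞)) ^ s ∂volume)
        = ∫⁻ t in T, (‖(fun t : ℝ => t ^ (-a⁻¹ * s)) t‖₊ : ℝ≥0∞) ∂volume := by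
      rw [← lintegral_indicator hTm]
      congr 1
      funext t
      by_cases ht : t ∈ T
      · have ht0 : (0:ℝ) < t := hTsub ht
        rw [hh_def]
        rw [Set.indicator_of_mem ht, Set.indicator_of_mem ht]
        rw [← ENNReal.coe_rpow_of_nonneg _ hs.le]
        congr 1
        have habs : ‖t ^ (-a⁻¹)‖₊ = (t ^ (-a⁻¹)).toNNReal := by
          ext
          simp [Real.norm_eq_abs, abs_of_nonneg (Real.rpow_nonneg ht0.le _),
            Real.coe_toNNReal _ (Real.rpow_nonneg ht0.le _)]
        have habs2 : ‖t ^ (-a⁻¹ * s)‖₊ = (t ^ (-a⁻¹ * s)).toNNReal := by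
          ext
          simp [Real.norm_eq_abs, abs_of_nonneg (Real.rpow_nonneg ht0.le _),
            Real.coe_toNNReal _ (Real.rpow_nonneg ht0.le _)]
        rw [habs, habs2]
        ext
        rw [NNReal.coe_rpow]
        rw [Real.coe_toNNReal _ (Real.rpow_nonneg ht0.le _),
          Real.coe_toNNReal _ (Real.rpow_nonneg ht0.le _)]
        rw [← Real.rpow_mul ht0.le]
      · rw [hh_def]
        rw [Set.indicator_of_notMem ht, Set.indicator_of_notMem ht]
        simp [ENNReal.zero_rpow_of_pos hs]
    rw [step1, step2, step3, stepk, mul_one, steph]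
  -- conclude
  have hfin : (∫⁻ x, ((‖g x‖₊ : ℝ≥0∞)) ^ b ∂volume) < ⊤ := by
    rw [key b hb0]
    exact (hasFiniteIntegral_def _ _).1 hint_b.2
  have hinf : (∫⁻ x, ((‖g x‖₊ : ℝ≥0∞)) ^ a ∂volume) = ⊤ := by
    by_contra hne
    have hfin' : (∫⁻ t in T, (‖(fun t : ℝ => t ^ (-a⁻¹ * a)) t‖₊ : ℝ≥0∞) ∂volume) < ⊤ := by
      rw [← key a ha0]
      exact lt_top_iff_ne_top.2 hne
    exact hnint_a ⟨(measurable_id.pow_const _).aestronglyMeasurable,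
      (hasFiniteIntegral_def _ _).2 hfin'⟩
  refine ⟨g, hg_meas, ?_, ?_⟩
  · rw [eLpNorm_eq_lintegral_rpow_enorm_toReal ((one_pos.trans_le hq).ne') hqt]
    exact ENNReal.rpow_lt_top_of_nonneg (by positivity) hfin.ne
  · rw [eLpNorm_eq_lintegral_rpow_enorm_toReal ((one_pos.trans_le hp).ne') hpt]
    erw [hinf]
    exact ENNReal.top_rpow_of_pos (by positivity)

end Aux

theorem stmt5 (d : ℕ) (hd : 0 < d) (p q : ℝ≥0∞) (hp : 1 ≤ p) (hq : 1 ≤ q) (hpq : p ≠ q) :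
    ∃ f : (Fin d → ℝ) × (Fin d → ℝ) → ℂ,
      AEStronglyMeasurable f volume ∧ mixedNorm p q f < ⊤ ∧
      mixedNorm p q (fun z => f (-z.2, z.1)) = ⊤ := by
  classical
  obtain ⟨m, rfl⟩ : ∃ m, d = m + 1 := ⟨d - 1, (Nat.succ_pred_eq_of_pos hd).symm⟩
  have hp0 : p ≠ 0 := (one_pos.trans_le hp).ne'
  have hq0 : q ≠ 0 := (one_pos.trans_le hq).ne'
  have hμ0 : (volume : Measure (Fin (m + 1) → ℝ)) ≠ 0 := aux_vol_ne_zero (m + 1)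
  have hvol_univ : (volume : Measure (Fin (m + 1) → ℝ)) Set.univ = ⊤ :=
    measure_univ_of_isAddLeftInvariant volume
  have hball_pos : 0 < volume (Metric.ball (0 : Fin (m + 1) → ℝ) 1) :=
    Metric.measure_ball_pos _ _ one_pos
  set χ : (Fin (m + 1) → ℝ) → ℂ :=
    (Metric.ball (0 : Fin (m + 1) → ℝ) 1).indicator (fun _ => 1) with hχ
  have hχmeas : Measurable χ := measurable_const.indicator measurableSet_ball
  have hχfin : ∀ r : ℝ≥0∞, eLpNorm χ r volume < ⊤ := fun r =>
    (memLp_indicator_const r measurableSet_ball 1 (Or.inr measure_ball_lt_top.ne)).2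
  have hχball : ∀ y ∈ Metric.ball (0 : Fin (m + 1) → ℝ) 1, χ y = 1 := fun y hy => by
    simp [hχ, Set.indicator_of_mem hy]
  by_cases hqt : q = ⊤
  · -- Case I : q = ⊤, p < ⊤
    have hpt : p ≠ ⊤ := by rw [hqt] at hpq; exact hpq
    have hpr : 0 < p.toReal := ENNReal.toReal_pos hp0 hpt
    refine ⟨fun z => χ z.1, (hχmeas.comp measurable_fst).aestronglyMeasurable, ?_, ?_⟩
    · have h1 : eLpNorm (fun _ : Fin (m + 1) → ℝ => (1 : ℂ)) q volume < ⊤ := by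
        rw [hqt, eLpNorm_exponent_top, eLpNormEssSup_const _ hμ0]
        simp
      have := mixed_fin hp hq χ (fun _ => (1 : ℂ)) aemeasurable_const (hχfin p) h1
      simpa using this
    · refine mixed_inf hq _ (Metric.ball (0 : Fin (m + 1) → ℝ) 1)
        measurableSet_ball hball_pos (fun ω hω => ?_)
      have hωb : -ω ∈ Metric.ball (0 : Fin (m + 1) → ℝ) 1 := by
        rw [mem_ball_zero_iff] at *
        simpa using hω
      have : (fun x : Fin (m + 1) → ℝ => χ (-ω)) = fun _ => (1 : ℂ) := by
        funext x; rw [hχball _ hωb]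
      show eLpNorm (fun x : Fin (m + 1) → ℝ => χ (-ω)) p volume = ⊤
      rw [this, eLpNorm_const _ hp0 hμ0, hvol_univ]
      rw [ENNReal.top_rpow_of_pos (by positivity)]
      simp
  · by_cases hpt : p = ⊤
    · -- Case II : p = ⊤, q < ⊤
      have hqr : 0 < q.toReal := ENNReal.toReal_pos hq0 hqt
      have hχne : ¬ (χ =ᵐ[volume] (fun _ => (0 : ℂ))) := by
        intro hcontra
        have h0 : volume {y | ¬ χ y = 0} = 0 := ae_iff.1 hcontra
        have hsub : Metric.ball (0 : Fin (m + 1) → ℝ) 1 ⊆ {y | ¬ χ y = 0} := fun y hy => by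
          simp [Set.mem_setOf_eq, hχball y hy]
        exact hball_pos.ne' (measure_mono_null hsub h0)
      refine ⟨fun z => χ z.2, (hχmeas.comp measurable_snd).aestronglyMeasurable, ?_, ?_⟩
      · have h1 : eLpNorm (fun _ : Fin (m + 1) → ℝ => (1 : ℂ)) p volume < ⊤ := by
          rw [hpt, eLpNorm_exponent_top, eLpNormEssSup_const _ hμ0]
          simp
        have := mixed_fin hp hq (fun _ => (1 : ℂ)) χ hχmeas.aemeasurable h1 (hχfin q)
        simpa using this
      · show mixedNorm p q (fun z : (Fin (m + 1) → ℝ) × (Fin (m + 1) → ℝ) => χ z.1) = ⊤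
        have hc0 : eLpNorm χ p volume ≠ 0 := by
          rw [Ne, eLpNorm_eq_zero_iff hχmeas.aestronglyMeasurable hp0]
          exact hχne
        rw [mixedNorm, if_neg hqt]
        have h2 : ∫⁻ _ : Fin (m + 1) → ℝ, (eLpNorm χ p volume) ^ q.toReal ∂volume = ⊤ := by
          rw [lintegral_const, hvol_univ, ENNReal.mul_top]
          intro h
          rcases ENNReal.rpow_eq_zero_iff.1 h with ⟨h1, _⟩ | ⟨_, h2⟩
          · exact hc0 h1
          · exact absurd h2 (not_lt.2 hqr.le)
        rw [h2, ENNReal.top_rpow_of_pos (by positivity)]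
    · -- Case III : p, q < ⊤, p ≠ q
      obtain ⟨g, hgmeas, hgq, hgp⟩ := exists_lq_not_lp m hp hq hpt hqt hpq
      refine ⟨fun z => χ z.1 * g z.2,
        ((hχmeas.comp measurable_fst).mul (hgmeas.comp measurable_snd)).aestronglyMeasurable,
        mixed_fin hp hq χ g hgmeas.aemeasurable (hχfin p) hgq, ?_⟩
      refine mixed_inf hq _ (Metric.ball (0 : Fin (m + 1) → ℝ) 1)
        measurableSet_ball hball_pos (fun ω hω => ?_)
      have hωb : -ω ∈ Metric.ball (0 : Fin (m + 1) → ℝ) 1 := by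
        rw [mem_ball_zero_iff] at *
        simpa using hω
      show eLpNorm (fun x : Fin (m + 1) → ℝ => χ (-ω) * g x) p volume = ⊤
      have h3 : (fun x : Fin (m + 1) → ℝ => χ (-ω) * g x) = (χ (-ω)) • g := by
        funext x; simp
      rw [h3, eLpNorm_const_smul, hgp, hχball _ hωb]
      simp
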